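/- The set L_QM of all functions S : 𝔄 → L(ℋ) such that S(𝒜) ∈ L(𝒜) for every 𝒜 ∈ 𝔄 and S(𝒜₁) ≤ S(𝒜₂) whenever 𝒜₁ ⊆ 𝒜₂, equipped with the pointwise partial order S₁ ≤ S₂ iff S₁(𝒜) ≤ S₂(𝒜) for all 𝒜 ∈ 𝔄, is a complete distributive lattice, with binary meet and join computed pointwise: (S₁ ∨ S₂)(𝒜) = S₁(𝒜) ∨ S₂(𝒜) and (S₁ ∧ S₂)(𝒜) = S₁(𝒜) ∧ S₂(𝒜). -/

import Mathlib

open scoped ENNReal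

variable (H : Type*) [NormedAddCommGroup H] [InnerProductSpace ℂ H] [CompleteSpace H]

/-- An orthogonal projection on the Hilbert space `H`, i.e. an element of `L(ℋ)`. -/
def IsProj (P : H →L[ℂ] H) : Prop := IsIdempotentElem P ∧ IsSelfAdjoint P

/-- The lattice order on projections: `P ≤ Q` iff `P * Q = P`. -/
def pleq (P Q : H →L[ℂ] H) : Prop := P * Q = P

/-- An abelian (commutative) von Neumann algebra. -/
def IsAbelianAlg (A : VonNeumannAlgebra H) : Prop :=
  ∀ x ∈ A, ∀ y ∈ A, x * y = y * x
/-- `R` is the join `P ⊔ Q` in the lattice `L(𝒜)` of projections belonging to `A`. -/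
def IsProjSupIn (A : VonNeumannAlgebra H) (P Q R : H →L[ℂ] H) : Prop :=
  R ∈ A ∧ IsProj H R ∧ pleq H P R ∧ pleq H Q R ∧
    ∀ R', R' ∈ A → IsProj H R' → pleq H P R' → pleq H Q R' → pleq H R R'
/-- `R` is the meet `P ⊓ Q` in the lattice `L(𝒜)` of projections belonging to `A`. -/
def IsProjInfIn (A : VonNeumannAlgebra H) (P Q R : H →L[ℂ] H) : Prop :=
  R ∈ A ∧ IsProj H R ∧ pleq H R P ∧ pleq H R Q ∧
    ∀ R', R' ∈ A → IsProj H R' → pleq H R' P → pleq H R' Q → pleq H R' R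
/-- The collection `𝔄` of abelian von Neumann subalgebras of `B(H)`. -/
def AbAlg := {A : VonNeumannAlgebra H // IsAbelianAlg H A}
/-- The lattice `L_QM`: monotone functions `S : 𝔄 → L(ℋ)` with `S(𝒜) ∈ L(𝒜)`. -/
structure LQM where
  S : AbAlg H → (H →L[ℂ] H)
  isProj : ∀ A : AbAlg H, IsProj H (S A)
  mem : ∀ A : AbAlg H, S A ∈ A.1
  mono : ∀ A B : AbAlg H, A.1 ≤ B.1 → pleq H (S A) (S B)

/-- `L_QM` carries the pointwise partial order. -/
instance : PartialOrder (LQM H) where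
  le S₁ S₂ := ∀ A : AbAlg H, pleq H (S₁.S A) (S₂.S A)
  le_refl S A := (S.isProj A).1
  le_trans S₁ S₂ S₃ h12 h23 A := by
    show S₁.S A * S₃.S A = S₁.S A
    calc S₁.S A * S₃.S A = S₁.S A * S₂.S A * S₃.S A := by rw [h12 A]
      _ = S₁.S A * (S₂.S A * S₃.S A) := mul_assoc _ _ _
      _ = S₁.S A := by rw [h23 A, h12 A]
  le_antisymm S₁ S₂ h12 h21 := by
    have hS : S₁.S = S₂.S := funext fun A => by
      have hc : S₁.S A * S₂.S A = S₂.S A * S₁.S A :=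
        A.2 _ (S₁.mem A) _ (S₂.mem A)
      calc S₁.S A = S₁.S A * S₂.S A := (h12 A).symm
        _ = S₂.S A * S₁.S A := hc
        _ = S₂.S A := h21 A
    cases S₁; cases S₂; cases hS; rfl

theorem LQM.le_def (S₁ S₂ : LQM H) :
    S₁ ≤ S₂ ↔ ∀ A : AbAlg H, pleq H (S₁.S A) (S₂.S A) := Iff.rfl

set_option linter.unusedSectionVars false


section RingAux
variable {R : Type*} [Ring R] {x y z w : R}

lemma jmul_left (hx : x*x = x) : x * (x + y - x*y) = x := by
  rw [mul_sub, mul_add, hx, ← mul_assoc, hx]; abel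

lemma jmul_right (hy : y*y = y) (hc : x*y = y*x) : y * (x + y - x*y) = y := by
  rw [mul_sub, mul_add, hy, ← mul_assoc, ← hc, mul_assoc, hy]; abel

lemma jmul_ub (h1 : x*w = x) (h2 : y*w = y) : (x + y - x*y) * w = x + y - x*y := by
  rw [sub_mul, add_mul, h1, h2, mul_assoc, h2]

lemma join_idem (hx : x*x = x) (hy : y*y = y) (hc : x*y = y*x) :
    (x + y - x*y) * (x + y - x*y) = x + y - x*y :=
  jmul_ub (jmul_left hx) (jmul_right hy hc)

lemma meet_le_left (hx : x*x = x) (hc : x*y = y*x) : (x*y)*x = x*y := by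
  rw [mul_assoc, ← hc, ← mul_assoc, hx]

lemma meet_le_right (hy : y*y = y) : (x*y)*y = x*y := by
  rw [mul_assoc, hy]

lemma meet_glb (h1 : w*x = w) (h2 : w*y = w) : w*(x*y) = w := by
  rw [← mul_assoc, h1, h2]

lemma meet_idem (hx : x*x = x) (hy : y*y = y) (hc : x*y = y*x) : (x*y)*(x*y) = x*y := by
  rw [mul_assoc, ← mul_assoc y x y, ← hc, mul_assoc, hy, ← mul_assoc, hx]

lemma distrib_aux (hx : x*x = x) (hxy : x*y = y*x) :
    x * (y + z - y*z) = x*y + x*z - (x*y)*(x*z) := by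
  have key : (x*y)*(x*z) = x*(y*z) := by
    rw [mul_assoc, ← mul_assoc y x z, ← hxy, mul_assoc, ← mul_assoc, ← mul_assoc, hx, mul_assoc]
  rw [key, mul_sub, mul_add]

end RingAux
section ProjAux
variable {H}

lemma pleq_trans {P Q R : H →L[ℂ] H} (h1 : pleq H P Q) (h2 : pleq H Q R) : pleq H P R := by
  unfold pleq at *
  calc P * R = P * Q * R := by rw [h1]
    _ = P * (Q * R) := mul_assoc _ _ _
    _ = P := by rw [h2, h1]

lemma pleq_star_comm {P Q : H →L[ℂ] H} (hP : IsProj H P) (hQ : IsProj H Q) (h : pleq H P Q) :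
    Q * P = P := by
  have := congrArg star h
  rwa [star_mul, hP.2.star_eq, hQ.2.star_eq] at this

variable (H) in
noncomputable def projOf (K : Submodule ℂ H) [CompleteSpace K] : H →L[ℂ] H :=
  K.subtypeL ∘L Submodule.orthogonalProjectionOnto K

lemma projOf_apply (K : Submodule ℂ H) [CompleteSpace K] (x : H) :
    projOf H K x = Submodule.orthogonalProjectionOnto K x := rfl

lemma projOf_mem (K : Submodule ℂ H) [CompleteSpace K] (x : H) : projOf H K x ∈ K :=
  (Submodule.orthogonalProjectionOnto K x).2

lemma projOf_eq_self {K : Submodule ℂ H} [CompleteSpace K] {x : H} (hx : x ∈ K) :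
    projOf H K x = x :=
  Submodule.starProjection_eq_self_iff.mpr hx

lemma isProj_projOf (K : Submodule ℂ H) [CompleteSpace K] : IsProj H (projOf H K) := by
  constructor
  · show projOf H K * projOf H K = projOf H K
    ext x
    show projOf H K (projOf H K x) = projOf H K x
    exact projOf_eq_self (projOf_mem K x)
  · exact isSelfAdjoint_starProjection K

lemma projOf_mono {K K' : Submodule ℂ H} [CompleteSpace K] [CompleteSpace K'] (h : K ≤ K') :
    projOf H K * projOf H K' = projOf H K := by
  ext x
  show projOf H K (projOf H K' x) = projOf H K x
  rw [projOf_apply, projOf_apply, projOf_apply]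
  exact_mod_cast congrArg Subtype.val (Submodule.orthogonalProjectionOnto_starProjection_of_le h x)

lemma isClosed_range_of_isProj {P : H →L[ℂ] H} (hP : IsProj H P) :
    IsClosed ((LinearMap.range (P : H →ₗ[ℂ] H) : Submodule ℂ H) : Set H) := by
  have hset : ((LinearMap.range (P : H →ₗ[ℂ] H) : Submodule ℂ H) : Set H) = (fun x => P x - x) ⁻¹' {0} := by
    ext x
    simp only [SetLike.mem_coe, LinearMap.mem_range, Set.mem_preimage, Set.mem_singleton_iff,
      sub_eq_zero]
    constructor
    · rintro ⟨y, rfl⟩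
      rw [ContinuousLinearMap.coe_coe, ← ContinuousLinearMap.mul_apply, hP.1]
    · intro h; exact ⟨x, h⟩
  rw [hset]
  exact IsClosed.preimage (P.continuous.sub continuous_id) isClosed_singleton

lemma eq_projOf_range {P : H →L[ℂ] H} (hP : IsProj H P)
    [CompleteSpace (LinearMap.range (P : H →ₗ[ℂ] H))] : P = projOf H (LinearMap.range (P : H →ₗ[ℂ] H)) := by
  ext x
  symm
  rw [projOf_apply]
  refine Submodule.eq_starProjection_of_mem_of_inner_eq_zero ⟨x, rfl⟩ ?_
  rintro _ ⟨z, rfl⟩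
  rw [ContinuousLinearMap.coe_coe, ← ContinuousLinearMap.adjoint_inner_left, hP.2.adjoint_eq, map_sub,
    ← ContinuousLinearMap.mul_apply P P, hP.1, sub_self, inner_zero_left]

lemma range_le_of_pleq {P Q : H →L[ℂ] H} (hP : IsProj H P) (hQ : IsProj H Q)
    (h : pleq H P Q) : LinearMap.range (P : H →ₗ[ℂ] H) ≤ LinearMap.range (Q : H →ₗ[ℂ] H) := by
  rintro _ ⟨y, rfl⟩
  refine ⟨P y, ?_⟩
  rw [ContinuousLinearMap.coe_coe, ← ContinuousLinearMap.mul_apply, pleq_star_comm hP hQ h, ContinuousLinearMap.coe_coe]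

lemma pleq_projOf_of_range_le {P : H →L[ℂ] H} (hP : IsProj H P) {K : Submodule ℂ H}
    [CompleteSpace K] (h : LinearMap.range (P : H →ₗ[ℂ] H) ≤ K) : pleq H P (projOf H K) := by
  haveI := (isClosed_range_of_isProj hP).completeSpace_coe
  show P * projOf H K = P
  nth_rewrite 1 [eq_projOf_range hP]
  nth_rewrite 2 [eq_projOf_range hP]
  exact projOf_mono h

lemma projOf_pleq {K : Submodule ℂ H} [CompleteSpace K] {Q : H →L[ℂ] H} (hQ : IsProj H Q)
    (h : K ≤ LinearMap.range (Q : H →ₗ[ℂ] H)) : pleq H (projOf H K) Q := by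
  haveI := (isClosed_range_of_isProj hQ).completeSpace_coe
  show projOf H K * Q = projOf H K
  nth_rewrite 1 [eq_projOf_range hQ]
  exact projOf_mono h

variable (H) in
noncomputable def supSpace (𝒮 : Set (H →L[ℂ] H)) : Submodule ℂ H :=
  (⨆ P ∈ 𝒮, LinearMap.range (P : H →ₗ[ℂ] H)).topologicalClosure

instance (𝒮 : Set (H →L[ℂ] H)) : CompleteSpace (supSpace H 𝒮) :=
  (⨆ P ∈ 𝒮, LinearMap.range (P : H →ₗ[ℂ] H)).isClosed_topologicalClosure.completeSpace_coe

lemma isClosed_supSpace (𝒮 : Set (H →L[ℂ] H)) : IsClosed ((supSpace H 𝒮 : Submodule ℂ H) : Set H) :=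
  Submodule.isClosed_topologicalClosure _

variable (H) in
noncomputable def supProj (𝒮 : Set (H →L[ℂ] H)) : H →L[ℂ] H := projOf H (supSpace H 𝒮)

lemma isProj_supProj (𝒮 : Set (H →L[ℂ] H)) : IsProj H (supProj H 𝒮) := isProj_projOf _

lemma pleq_supProj {𝒮 : Set (H →L[ℂ] H)} {P : H →L[ℂ] H} (hP : IsProj H P) (h : P ∈ 𝒮) :
    pleq H P (supProj H 𝒮) :=
  pleq_projOf_of_range_le hP (le_trans
    (le_iSup₂ (f := fun P (_ : P ∈ 𝒮) => LinearMap.range (P : H →ₗ[ℂ] H)) P h)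
    (Submodule.le_topologicalClosure _))

lemma supProj_min {𝒮 : Set (H →L[ℂ] H)} (h𝒮 : ∀ P ∈ 𝒮, IsProj H P) {Q : H →L[ℂ] H}
    (hQ : IsProj H Q) (h : ∀ P ∈ 𝒮, pleq H P Q) : pleq H (supProj H 𝒮) Q := by
  haveI := (isClosed_range_of_isProj hQ).completeSpace_coe
  refine projOf_pleq hQ ?_
  exact Submodule.topologicalClosure_minimal _
    (iSup₂_le fun P hP => range_le_of_pleq (h𝒮 P hP) hQ (h P hP))
    (isClosed_range_of_isProj hQ)

lemma commute_projOf {K : Submodule ℂ H} [CompleteSpace K] {y : H →L[ℂ] H}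
    (h1 : ∀ x ∈ K, y x ∈ K) (h2 : ∀ x ∈ K, ContinuousLinearMap.adjoint y x ∈ K) :
    y * projOf H K = projOf H K * y := by
  ext x
  show y (projOf H K x) = projOf H K (y x)
  symm
  rw [projOf_apply]
  refine Submodule.eq_starProjection_of_mem_of_inner_eq_zero (h1 _ (projOf_mem K x)) ?_
  intro w hw
  rw [show y x - y (projOf H K x) = y (x - projOf H K x) from (map_sub y _ _).symm,
    ← ContinuousLinearMap.adjoint_inner_right]
  exact (Submodule.mem_orthogonal' K _).mp (Submodule.sub_starProjection_mem_orthogonal x) _ (h2 w hw)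

lemma supProj_mem {𝒮 : Set (H →L[ℂ] H)} (A : VonNeumannAlgebra H) (h𝒮p : ∀ P ∈ 𝒮, IsProj H P)
    (h𝒮 : ∀ P ∈ 𝒮, P ∈ A) : supProj H 𝒮 ∈ A := by
  rw [← SetLike.mem_coe, ← A.centralizer_centralizer]
  refine Set.mem_centralizer_iff.mpr fun y hy => ?_
  have hcy : ∀ P ∈ 𝒮, P * y = y * P := fun P hP =>
    Set.mem_centralizer_iff.mp hy P (SetLike.mem_coe.mpr (h𝒮 P hP))
  have hcy' : ∀ P ∈ 𝒮, P * ContinuousLinearMap.adjoint y = ContinuousLinearMap.adjoint y * P := by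
    intro P hP
    have h := congrArg star (hcy P hP)
    rw [star_mul, star_mul, (h𝒮p P hP).2.star_eq, ContinuousLinearMap.star_eq_adjoint] at h
    exact h.symm
  have key : ∀ z : H →L[ℂ] H, (∀ P ∈ 𝒮, P * z = z * P) →
      ∀ x ∈ supSpace H 𝒮, z x ∈ supSpace H 𝒮 := by
    intro z hz
    have hU : (⨆ P ∈ 𝒮, LinearMap.range (P : H →ₗ[ℂ] H)) ≤ (supSpace H 𝒮).comap (z : H →ₗ[ℂ] H) := by
      refine iSup₂_le fun P hP => ?_
      rintro _ ⟨w, rfl⟩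
      show z (P w) ∈ supSpace H 𝒮
      rw [← ContinuousLinearMap.mul_apply, ← hz P hP, ContinuousLinearMap.mul_apply]
      exact Submodule.le_topologicalClosure _
        (le_iSup₂ (f := fun P (_ : P ∈ 𝒮) => LinearMap.range (P : H →ₗ[ℂ] H)) P hP ⟨z w, rfl⟩)
    have hclosed : IsClosed (((supSpace H 𝒮).comap (z : H →ₗ[ℂ] H) : Submodule ℂ H) : Set H) :=
      (isClosed_supSpace 𝒮).preimage z.continuous
    intro x hx
    exact Submodule.mem_comap.mp (Submodule.topologicalClosure_minimal _ hU hclosed hx)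
  exact commute_projOf (key y hcy) (key _ hcy')

end ProjAux

section LQMAux
variable {H}

lemma LQM.ext' {S₁ S₂ : LQM H} (h : S₁.S = S₂.S) : S₁ = S₂ := by
  cases S₁; cases S₂; cases h; rfl

variable (H) in
/-- pointwise join of two `LQM` elements -/
noncomputable def joinS (S₁ S₂ : LQM H) : LQM H where
  S A := S₁.S A + S₂.S A - S₁.S A * S₂.S A
  isProj A := by
    have hc : S₁.S A * S₂.S A = S₂.S A * S₁.S A := A.2 _ (S₁.mem A) _ (S₂.mem A)
    refine ⟨join_idem (S₁.isProj A).1 (S₂.isProj A).1 hc, ?_⟩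
    show star _ = _
    rw [star_sub, star_add, star_mul, (S₁.isProj A).2.star_eq, (S₂.isProj A).2.star_eq, ← hc]
  mem A := sub_mem (add_mem (S₁.mem A) (S₂.mem A)) (mul_mem (S₁.mem A) (S₂.mem A))
  mono A B hAB := by
    have hcB : S₁.S B * S₂.S B = S₂.S B * S₁.S B := B.2 _ (S₁.mem B) _ (S₂.mem B)
    have hx : pleq H (S₁.S A) (S₁.S B + S₂.S B - S₁.S B * S₂.S B) :=
      pleq_trans (S₁.mono A B hAB) (jmul_left (S₁.isProj B).1)
    have hy : pleq H (S₂.S A) (S₁.S B + S₂.S B - S₁.S B * S₂.S B) :=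
      pleq_trans (S₂.mono A B hAB) (jmul_right (S₂.isProj B).1 hcB)
    exact jmul_ub hx hy

variable (H) in
/-- pointwise meet of two `LQM` elements -/
noncomputable def meetS (S₁ S₂ : LQM H) : LQM H where
  S A := S₁.S A * S₂.S A
  isProj A := by
    have hc : S₁.S A * S₂.S A = S₂.S A * S₁.S A := A.2 _ (S₁.mem A) _ (S₂.mem A)
    refine ⟨meet_idem (S₁.isProj A).1 (S₂.isProj A).1 hc, ?_⟩
    show star _ = _
    rw [star_mul, (S₁.isProj A).2.star_eq, (S₂.isProj A).2.star_eq, ← hc]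
  mem A := mul_mem (S₁.mem A) (S₂.mem A)
  mono A B hAB := by
    have hcA : S₁.S A * S₂.S A = S₂.S A * S₁.S A := A.2 _ (S₁.mem A) _ (S₂.mem A)
    have hx : pleq H (S₁.S A * S₂.S A) (S₁.S B) :=
      pleq_trans (meet_le_left (S₁.isProj A).1 hcA) (S₁.mono A B hAB)
    have hy : pleq H (S₁.S A * S₂.S A) (S₂.S B) :=
      pleq_trans (meet_le_right (S₂.isProj A).1) (S₂.mono A B hAB)
    exact meet_glb hx hy

lemma joinS_isLUB (S₁ S₂ : LQM H) : IsLUB {S₁, S₂} (joinS H S₁ S₂) := by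
  constructor
  · rintro x (rfl | rfl)
    · exact fun A => jmul_left (x.isProj A).1
    · exact fun A => jmul_right (x.isProj A).1 (A.2 _ (S₁.mem A) _ (x.mem A))
  · intro u hu A
    exact jmul_ub (hu (Set.mem_insert _ _) A) (hu (Set.mem_insert_of_mem _ rfl) A)

lemma meetS_isGLB (S₁ S₂ : LQM H) : IsGLB {S₁, S₂} (meetS H S₁ S₂) := by
  constructor
  · rintro x (rfl | rfl)
    · exact fun A => meet_le_left (x.isProj A).1 (A.2 _ (x.mem A) _ (S₂.mem A))
    · exact fun A => meet_le_right (x.isProj A).1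
  · intro u hu A
    exact meet_glb (hu (Set.mem_insert _ _) A) (hu (Set.mem_insert_of_mem _ rfl) A)

end LQMAux

/-- `L_QM` with the pointwise order is a complete distributive lattice,
with binary meet and join computed pointwise (in each `L(𝒜)`). -/
theorem lqm_complete_distributive_lattice :
    (∀ T : Set (LQM H), ∃ j : LQM H, IsLUB T j) ∧
    (∀ T : Set (LQM H), ∃ m : LQM H, IsGLB T m) ∧
    (∀ S₁ S₂ : LQM H, ∃ j : LQM H, IsLUB {S₁, S₂} j ∧
      ∀ A : AbAlg H, IsProjSupIn H A.1 (S₁.S A) (S₂.S A) (j.S A)) ∧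
    (∀ S₁ S₂ : LQM H, ∃ m : LQM H, IsGLB {S₁, S₂} m ∧
      ∀ A : AbAlg H, IsProjInfIn H A.1 (S₁.S A) (S₂.S A) (m.S A)) ∧
    (∀ a b c bc abc ab ac u : LQM H, IsLUB {b, c} bc → IsGLB {a, bc} abc →
      IsGLB {a, b} ab → IsGLB {a, c} ac → IsLUB {ab, ac} u → abc = u) := by
  have part1 : ∀ T : Set (LQM H), ∃ j : LQM H, IsLUB T j := by
    intro T
    have h𝒮p : ∀ A : AbAlg H, ∀ P ∈ (fun S : LQM H => S.S A) '' T, IsProj H P := by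
      rintro A P ⟨S, _, rfl⟩; exact S.isProj A
    refine ⟨⟨fun A => supProj H ((fun S : LQM H => S.S A) '' T),
      fun A => isProj_supProj _,
      fun A => supProj_mem A.1 (h𝒮p A) (by rintro P ⟨S, _, rfl⟩; exact S.mem A), ?_⟩, ?_, ?_⟩
    · intro A B hAB
      refine supProj_min (h𝒮p A) (isProj_supProj _) ?_
      rintro P ⟨S, hS, rfl⟩
      exact pleq_trans (S.mono A B hAB) (pleq_supProj (S.isProj B) ⟨S, hS, rfl⟩)
    · intro S hS A
      exact pleq_supProj (S.isProj A) ⟨S, hS, rfl⟩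
    · intro u hu A
      refine supProj_min (h𝒮p A) (u.isProj A) ?_
      rintro P ⟨S, hS, rfl⟩
      exact hu hS A
  refine ⟨part1, ?_, ?_, ?_, ?_⟩
  · intro T
    obtain ⟨m, hm⟩ := part1 (lowerBounds T)
    exact ⟨m, fun t ht => hm.2 fun x hx => hx ht, fun x hx => hm.1 hx⟩
  · intro S₁ S₂
    refine ⟨joinS H S₁ S₂, joinS_isLUB S₁ S₂, fun A => ?_⟩
    have hc : S₁.S A * S₂.S A = S₂.S A * S₁.S A := A.2 _ (S₁.mem A) _ (S₂.mem A)
    exact ⟨(joinS H S₁ S₂).mem A, (joinS H S₁ S₂).isProj A,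
      jmul_left (S₁.isProj A).1, jmul_right (S₂.isProj A).1 hc,
      fun R' _ _ h1 h2 => jmul_ub h1 h2⟩
  · intro S₁ S₂
    refine ⟨meetS H S₁ S₂, meetS_isGLB S₁ S₂, fun A => ?_⟩
    have hc : S₁.S A * S₂.S A = S₂.S A * S₁.S A := A.2 _ (S₁.mem A) _ (S₂.mem A)
    exact ⟨(meetS H S₁ S₂).mem A, (meetS H S₁ S₂).isProj A,
      meet_le_left (S₁.isProj A).1 hc, meet_le_right (S₂.isProj A).1,
      fun R' _ _ h1 h2 => meet_glb h1 h2⟩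
  · intro a b c bc abc ab ac u hbc habc hab hac hu
    have e1 : bc = joinS H b c := hbc.unique (joinS_isLUB b c)
    subst e1
    have e2 : abc = meetS H a (joinS H b c) := habc.unique (meetS_isGLB a _)
    have e3 : ab = meetS H a b := hab.unique (meetS_isGLB a b)
    have e4 : ac = meetS H a c := hac.unique (meetS_isGLB a c)
    subst e3; subst e4
    have e5 : u = joinS H (meetS H a b) (meetS H a c) :=
      hu.unique (joinS_isLUB (meetS H a b) (meetS H a c))
    rw [e2, e5]
    refine LQM.ext' (funext fun A => ?_)
    show a.S A * (b.S A + c.S A - b.S A * c.S A) =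
      a.S A * b.S A + a.S A * c.S A - (a.S A * b.S A) * (a.S A * c.S A)
    exact distrib_aux (a.isProj A).1 (A.2 _ (a.mem A) _ (b.mem A))
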